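/- If u ∈ V, then for every y in [ε, Λ] one has u(y)/(y + u(y)²) ≥ w(y)/(y + w(y)²), and consequently Au(x) ≥ Aw(x) for every x in [ε, Λ]. -/

import Mathlib

open Real Set MeasureTheory intervalIntegral

/-- The function `w(x) = (4ε/λ)·√(ε/(Λx))`. -/
noncomputable def wfun (lam ε Λ : ℝ) (x : ℝ) : ℝ :=
  (4 * ε / lam) * Real.sqrt (ε / (Λ * x))

/-- The nonlinear integral operator `A`. -/
noncomputable def opA (lam ε Λ : ℝ) (u : ℝ → ℝ) (x : ℝ) : ℝ :=
  (lam / 2) * ∫ y in ε..Λ, (1 / (y + x + |y - x|)) * (y * u y / (y + (u y) ^ 2))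

/-- Membership in the set `V`: continuous on `[ε,Λ]` and `w(x) ≤ u(x) ≤ (λ/4)√Λ` there. -/
def memV (lam ε Λ : ℝ) (u : ℝ → ℝ) : Prop :=
  ContinuousOn u (Set.Icc ε Λ) ∧
    ∀ x ∈ Set.Icc ε Λ, wfun lam ε Λ x ≤ u x ∧ u x ≤ (lam / 4) * Real.sqrt Λ

theorem stmt_2 (ε Λ lam : ℝ) (hε : 0 < ε) (hεΛ : ε < Λ) (hlam : 2 < lam)
    (hratio : ε / Λ ≤ min (1 / 16)
      (((Real.sqrt (lam ^ 2 + 128 * (lam - 2)) - lam) / 64) ^ 2))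
    (u : ℝ → ℝ) (hu : memV lam ε Λ u) :
    (∀ y ∈ Set.Icc ε Λ,
        wfun lam ε Λ y / (y + (wfun lam ε Λ y) ^ 2) ≤ u y / (y + (u y) ^ 2)) ∧
      ∀ x ∈ Set.Icc ε Λ, opA lam ε Λ (wfun lam ε Λ) x ≤ opA lam ε Λ u x := by
  obtain ⟨hc, hb⟩ := hu
  have hΛ : 0 < Λ := hε.trans hεΛ
  have hlam0 : 0 < lam := by linarith
  have key : ∀ y ∈ Set.Icc ε Λ,
      wfun lam ε Λ y / (y + (wfun lam ε Λ y) ^ 2) ≤ u y / (y + (u y) ^ 2) := by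
    intro y hy
    obtain ⟨hy1, hy2⟩ := hy
    have hy0 : 0 < y := lt_of_lt_of_le hε hy1
    have hw0 : 0 ≤ wfun lam ε Λ y := by
      unfold wfun; positivity
    obtain ⟨hwu, hub⟩ := hb y ⟨hy1, hy2⟩
    have hu0 : 0 ≤ u y := hw0.trans hwu
    have huw : u y * wfun lam ε Λ y ≤ y := by
      have h1 : u y * wfun lam ε Λ y ≤ (lam / 4) * Real.sqrt Λ * wfun lam ε Λ y :=
        mul_le_mul_of_nonneg_right hub hw0
      have h2 : (lam / 4) * Real.sqrt Λ * wfun lam ε Λ y = ε * Real.sqrt (ε / y) := by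
        unfold wfun
        rw [show (lam / 4) * Real.sqrt Λ * ((4 * ε / lam) * Real.sqrt (ε / (Λ * y)))
            = ε * (Real.sqrt Λ * Real.sqrt (ε / (Λ * y))) * (lam / lam) by ring,
          div_self hlam0.ne', mul_one, ← Real.sqrt_mul hΛ.le,
          show Λ * (ε / (Λ * y)) = ε / y by field_simp]
      have h3 : Real.sqrt (ε / y) ≤ 1 := by
        rw [show (1:ℝ) = Real.sqrt 1 by simp]
        exact Real.sqrt_le_sqrt (by rw [div_le_one hy0]; exact hy1)
      nlinarith [Real.sqrt_nonneg (ε / y)]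
    have hd1 : 0 < y + (wfun lam ε Λ y) ^ 2 := by positivity
    have hd2 : 0 < y + (u y) ^ 2 := by positivity
    rw [div_le_div_iff₀ hd1 hd2]
    nlinarith [mul_nonneg (sub_nonneg.mpr hwu) (sub_nonneg.mpr huw)]
  refine ⟨key, ?_⟩
  intro x hx
  have hcw : ContinuousOn (wfun lam ε Λ) (Set.Icc ε Λ) := by
    apply continuousOn_const.mul
    apply Real.continuous_sqrt.comp_continuousOn
    exact continuousOn_const.div (continuous_const.mul continuous_id).continuousOn
      (fun y hy => by have : 0 < y := lt_of_lt_of_le hε hy.1; positivity)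
  have hcint : ∀ v : ℝ → ℝ, ContinuousOn v (Set.Icc ε Λ) →
      (∀ y ∈ Set.Icc ε Λ, 0 < y + (v y) ^ 2) →
      IntervalIntegrable (fun y => (1 / (y + x + |y - x|)) * (y * v y / (y + (v y) ^ 2)))
        MeasureTheory.volume ε Λ := by
    intro v hv hvpos
    apply ContinuousOn.intervalIntegrable
    rw [Set.uIcc_of_le hεΛ.le]
    apply ContinuousOn.mul
    · apply continuousOn_const.div
      · exact ((continuous_id.add continuous_const).add
          ((continuous_id.sub continuous_const).abs)).continuousOn
      · intro y hy
        have h1 : 0 < y := lt_of_lt_of_le hε hy.1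
        have h2 : 0 < x := lt_of_lt_of_le hε hx.1
        have := abs_nonneg (y - x)
        positivity
    · apply ContinuousOn.div
      · exact continuousOn_id.mul hv
      · exact continuousOn_id.add (hv.pow 2)
      · exact fun y hy => (hvpos y hy).ne'
  have hwpos : ∀ y ∈ Set.Icc ε Λ, 0 < y + (wfun lam ε Λ y) ^ 2 := by
    intro y hy
    have : 0 < y := lt_of_lt_of_le hε hy.1
    positivity
  have hupos : ∀ y ∈ Set.Icc ε Λ, 0 < y + (u y) ^ 2 := by
    intro y hy
    have : 0 < y := lt_of_lt_of_le hε hy.1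
    positivity
  unfold opA
  apply mul_le_mul_of_nonneg_left _ (by linarith : (0:ℝ) ≤ lam / 2)
  apply intervalIntegral.integral_mono_on hεΛ.le (hcint _ hcw hwpos) (hcint _ hc hupos)
  intro y hy
  have hy0 : 0 < y := lt_of_lt_of_le hε hy.1
  have hx0 : 0 < x := lt_of_lt_of_le hε hx.1
  have hden : 0 ≤ 1 / (y + x + |y - x|) := by
    have := abs_nonneg (y - x); positivity
  apply mul_le_mul_of_nonneg_left _ hden
  rw [mul_div_assoc, mul_div_assoc]
  exact mul_le_mul_of_nonneg_left (key y hy) hy0.le
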